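/- Let G be a tree (connected acyclic simple graph) on a finite vertex set V and let B be a complex matrix indexed by V × Fin 3 that is G-invertible. If ν : V × Fin 3 → ℂ satisfies B.mulVec ν = 0 and there exists a vertex j ∈ V with ν (j,a) = 0 for all a ∈ Fin 3, then ν = 0. (This is the key kernel-support lemma established inside the proof of Theorem 2: a G-invertible matrix over a tree admits no nonzero kernel vector whose support misses some bus.) -/

import Mathlib

open Matrix
open scoped ComplexOrder

/-- The `(i,j)` block of a matrix indexed by `V × Fin 3`:
the 3×3 matrix `(a,b) ↦ X (i,a) (j,b)`. -/
def blockOf {V : Type*} (X : Matrix (V × Fin 3) (V × Fin 3) ℂ) (i j : V) :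
    Matrix (Fin 3) (Fin 3) ℂ :=
  Matrix.of fun a b => X (i, a) (j, b)

/-- `X` is `G`-invertible: `X` is positive semidefinite, its blocks on edges of
`G` are invertible, and its blocks on non-adjacent pairs of distinct vertices
vanish. -/
def GInvertible {V : Type*} [Fintype V] [DecidableEq V] (G : SimpleGraph V)
    (X : Matrix (V × Fin 3) (V × Fin 3) ℂ) : Prop :=
  X.PosSemidef ∧
  (∀ i j : V, G.Adj i j → IsUnit (blockOf X i j)) ∧
  (∀ i j : V, i ≠ j → ¬ G.Adj i j → blockOf X i j = 0)

/-- **Kernel-support lemma (from the proof of Theorem 2).** A `G`-invertible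
matrix over a tree admits no nonzero kernel vector whose support misses some
bus: if `B.mulVec ν = 0` and `ν` vanishes on all three phases of some vertex
`j`, then `ν = 0`. -/
theorem g_invertible_tree_kernel_vector_vanishing_at_a_bus_is_zero
    {V : Type*} [Fintype V] [DecidableEq V]
    (G : SimpleGraph V) (hG : G.IsTree)
    (B : Matrix (V × Fin 3) (V × Fin 3) ℂ) (hB : GInvertible G B)
    (ν : V × Fin 3 → ℂ) (hker : B.mulVec ν = 0)
    (hmiss : ∃ j : V, ∀ a : Fin 3, ν (j, a) = 0) :
    ν = 0 := by
  classical
  obtain ⟨hPSD, hUnit, hZero⟩ := hB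
  obtain ⟨j, hj⟩ := hmiss
  -- Key propagation step: if ν vanishes at a vertex, it vanishes at all its neighbors.
  have key : ∀ v : V, (∀ a, ν (v, a) = 0) → ∀ i : V, G.Adj v i → ∀ a, ν (i, a) = 0 := by
    intro v hv i hvi
    set C : Set V := {k | ∃ p : G.Walk i k, v ∉ p.support} with hCdef
    have hiC : i ∈ C := ⟨SimpleGraph.Walk.nil, by simp [hvi.ne]⟩
    have hvC : v ∉ C := by
      rintro ⟨p, hp⟩
      exact hp p.end_mem_support
    have hstep : ∀ k l : V, k ∈ C → G.Adj k l → l ≠ v → l ∈ C := by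
      rintro k l ⟨p, hp⟩ hkl hlv
      refine ⟨p.concat hkl, ?_⟩
      rw [SimpleGraph.Walk.support_concat]
      intro hmem
      rcases List.mem_append.mp hmem with h | h
      · exact hp h
      · exact hlv (List.mem_singleton.mp h).symm
    have huniq : ∀ k : V, k ∈ C → G.Adj v k → k = i := by
      rintro k ⟨p, hp⟩ hvk
      by_contra hki
      have hvP : v ∉ (p.toPath : G.Walk i k).support :=
        fun h => hp (SimpleGraph.Walk.support_toPath_subset p h)
      have h1 : (SimpleGraph.Walk.cons hvk SimpleGraph.Walk.nil).IsPath := by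
        simp [SimpleGraph.Walk.cons_isPath_iff, hvk.ne]
      have h2 : (SimpleGraph.Walk.cons hvi (p.toPath : G.Walk i k)).IsPath := by
        rw [SimpleGraph.Walk.cons_isPath_iff]
        exact ⟨p.toPath.2, hvP⟩
      obtain ⟨q, -, hqu⟩ := hG.existsUnique_path v k
      have heq := (hqu _ h1).trans (hqu _ h2).symm
      have hlen := congrArg SimpleGraph.Walk.length heq
      simp only [SimpleGraph.Walk.length_cons, SimpleGraph.Walk.length_nil] at hlen
      have : (p.toPath : G.Walk i k).length = 0 := by omega
      exact hki (SimpleGraph.Walk.eq_of_length_eq_zero this).symm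
    set μ : V × Fin 3 → ℂ := fun p => if p.1 ∈ C then ν p else 0 with hμdef
    have hBμC : ∀ k : V × Fin 3, k.1 ∈ C → (B *ᵥ μ) k = 0 := by
      intro k hk
      have heq : (B *ᵥ μ) k = (B *ᵥ ν) k := by
        simp only [Matrix.mulVec, dotProduct]
        refine Finset.sum_congr rfl fun l _ => ?_
        by_cases hl : l.1 ∈ C
        · simp [hμdef, hl]
        · simp only [hμdef, if_neg hl, mul_zero]
          by_cases hlv : l.1 = v
          · have hν : ν l = 0 := by
              have : l = (v, l.2) := by rw [← hlv]
              rw [this]; exact hv l.2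
            rw [hν, mul_zero]
          · have hne : k.1 ≠ l.1 := fun h => hl (h ▸ hk)
            have hnadj : ¬ G.Adj k.1 l.1 := fun h => hl (hstep _ _ hk h hlv)
            have hb : B k l = 0 := by
              have := congrFun (congrFun (hZero _ _ hne hnadj) k.2) l.2
              simpa [blockOf] using this
            rw [hb, zero_mul]
      rw [heq, hker]
      rfl
    have hquad : star μ ⬝ᵥ (B *ᵥ μ) = 0 := by
      simp only [dotProduct]
      refine Finset.sum_eq_zero fun k _ => ?_
      by_cases hk : k.1 ∈ C
      · rw [hBμC k hk, mul_zero]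
      · simp [hμdef, hk]
    have hμ0 : B *ᵥ μ = 0 := (hPSD.dotProduct_mulVec_zero_iff μ).mp hquad
    -- the row of B *ᵥ μ at vertex v gives the block equation
    have hblock : (blockOf B v i) *ᵥ (fun b => ν (i, b)) = 0 := by
      funext a
      have h0 : (B *ᵥ μ) (v, a) = 0 := congrFun hμ0 (v, a)
      have hsum : (B *ᵥ μ) (v, a) = ∑ b : Fin 3, B (v, a) (i, b) * ν (i, b) := by
        simp only [Matrix.mulVec, dotProduct]
        rw [Fintype.sum_prod_type]
        rw [Finset.sum_eq_single i]
        · refine Finset.sum_congr rfl fun b _ => ?_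
          simp [hμdef, hiC]
        · intro x _ hx
          refine Finset.sum_eq_zero fun b _ => ?_
          by_cases hxC : x ∈ C
          · have hxv : v ≠ x := fun h => hvC (h ▸ hxC)
            have hnadj : ¬ G.Adj v x := fun h => hx (huniq x hxC h)
            have hb : B (v, a) (x, b) = 0 := by
              have := congrFun (congrFun (hZero _ _ hxv hnadj) a) b
              simpa [blockOf] using this
            rw [hb, zero_mul]
          · simp [hμdef, hxC]
        · intro h
          exact absurd (Finset.mem_univ i) h
      have : ∑ b : Fin 3, B (v, a) (i, b) * ν (i, b) = 0 := by rw [← hsum]; exact h0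
      simpa [blockOf, Matrix.mulVec, dotProduct] using this
    have hdet : IsUnit (blockOf B v i).det :=
      (Matrix.isUnit_iff_isUnit_det _).mp (hUnit v i hvi)
    intro a
    have hw : (fun b => ν (i, b)) = (blockOf B v i)⁻¹ *ᵥ ((blockOf B v i) *ᵥ fun b => ν (i, b)) := by
      rw [Matrix.mulVec_mulVec, Matrix.nonsing_inv_mul _ hdet, Matrix.one_mulVec]
    rw [hblock, Matrix.mulVec_zero] at hw
    exact congrFun hw a
  -- propagate along walks
  have prop : ∀ (u w : V) (p : G.Walk u w), (∀ a, ν (u, a) = 0) → ∀ a, ν (w, a) = 0 := by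
    intro u w p
    induction p with
    | nil => exact fun h => h
    | cons h p ih => exact fun hu => ih (key _ hu _ h)
  funext x
  obtain ⟨u, a⟩ := x
  have hr : G.Reachable j u := hG.isConnected.preconnected j u
  obtain ⟨p⟩ := hr
  exact prop j u p hj a
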